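/- arXiv:1406.6910 — 2 statements merged into one kernel-verified Lean document; each statement's English description precedes it below -/
import Mathlib

section
/- The intervals I_i, i ∈ ℤ, are pairwise disjoint, and their union over all i ∈ ℤ equals the open interval (0, √2). -/
noncomputable section

/-- `β = √2 - 1`. -/
def β : ℝ := Real.sqrt 2 - 1

/-- `ω = √2 + 1`. -/
def ω : ℝ := Real.sqrt 2 + 1

/-- The break points `Δ_i`. -/
def Δ (i : ℤ) : ℝ :=
  if i < 0 then β ^ i.natAbs
  else if i = 0 then β
  else Real.sqrt 2 - β ^ i.natAbs

/-- The intervals `I_i`. -/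
def Iint (i : ℤ) : Set ℝ :=
  if i < 0 then Set.Ioc (Δ (i - 1)) (Δ i)
  else if i = 0 then Set.Ioo β 1
  else Set.Ico (Δ i) (Δ (i + 1))

/-- The defining formula of `f` on the interval `I_i`. -/
def fval (i : ℤ) (s : ℝ) : ℝ :=
  if i < 0 then ω ^ (i.natAbs + 1) * (Δ i - s)
  else if i = 0 then ω * (s - β)
  else ω ^ (i.natAbs + 1) * (s - Δ i)

/-- `f` is the renormalization map: `f 0 = f √2 = 0` and on each interval `I_i`
    it is given by the corresponding affine formula. These conditions determine
    `f` uniquely on `[0, √2]`. -/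
def IsLuroth (f : ℝ → ℝ) : Prop :=
  f 0 = 0 ∧ f (Real.sqrt 2) = 0 ∧ ∀ i : ℤ, ∀ s ∈ Iint i, f s = fval i s

/-- `ℚ(√2)` as a subset of `ℝ`. -/
def QSqrt2 : Set ℝ := {x | ∃ a b : ℚ, x = (a : ℝ) + (b : ℝ) * Real.sqrt 2}

/-- `ℤ[√2]` as a subset of `ℝ`. -/
def ZSqrt2 : Set ℝ := {x | ∃ m n : ℤ, x = (m : ℝ) + (n : ℝ) * Real.sqrt 2}

/-- `M_d = {s ∈ [0,√2] : d·s ∈ ℤ[√2]}`. -/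
def Mset (d : ℤ) : Set ℝ :=
  {s | s ∈ Set.Icc 0 (Real.sqrt 2) ∧ (d : ℝ) * s ∈ ZSqrt2}


lemma one_lt_sqrt2 : 1 < Real.sqrt 2 := by
  nlinarith [Real.sq_sqrt (by norm_num : (2:ℝ) ≥ 0), Real.sqrt_nonneg 2]

lemma sqrt2_lt_two : Real.sqrt 2 < 2 := by
  nlinarith [Real.sq_sqrt (by norm_num : (2:ℝ) ≥ 0), Real.sqrt_nonneg 2]

lemma β_pos : 0 < β := by unfold β; linarith [one_lt_sqrt2]

lemma β_lt_one : β < 1 := by unfold β; linarith [sqrt2_lt_two]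

lemma Iint_neg {i : ℤ} (hi : i < 0) :
    Iint i = Set.Ioc (β ^ (i.natAbs + 1)) (β ^ i.natAbs) := by
  have h1 : i - 1 < 0 := by omega
  have h2 : (i - 1).natAbs = i.natAbs + 1 := by omega
  simp [Iint, Δ, hi, h1, h2]

lemma Iint_pos {i : ℤ} (hi : 0 < i) :
    Iint i = Set.Ico (Real.sqrt 2 - β ^ i.natAbs)
      (Real.sqrt 2 - β ^ (i.natAbs + 1)) := by
  have h1 : ¬ i < 0 := by omega
  have h2 : i ≠ 0 := by omega
  have h3 : ¬ i + 1 < 0 := by omega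
  have h4 : i + 1 ≠ 0 := by omega
  have h5 : (i + 1).natAbs = i.natAbs + 1 := by omega
  simp [Iint, Δ, h1, h2, h3, h4, h5]

lemma Iint_zero : Iint 0 = Set.Ioo β 1 := by simp [Iint]

lemma exists_pow_sand {y : ℝ} (hy0 : 0 < y) (hyβ : y ≤ β) :
    ∃ n : ℕ, 1 ≤ n ∧ β ^ (n + 1) < y ∧ y ≤ β ^ n := by
  have hP : ∃ k : ℕ, β ^ k < y := exists_pow_lt_of_lt_one hy0 β_lt_one
  set N := Nat.find hP with hNdef
  have hN : β ^ N < y := Nat.find_spec hP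
  have hmin : ∀ m, m < N → ¬ β ^ m < y := fun m hm => Nat.find_min hP hm
  have hN2 : 2 ≤ N := by
    by_contra hc
    interval_cases N
    · simp at hN; linarith [β_lt_one]
    · rw [pow_one] at hN; linarith
  refine ⟨N - 1, by omega, ?_, ?_⟩
  · have : N - 1 + 1 = N := by omega
    rw [this]; exact hN
  · have := hmin (N - 1) (by omega)
    linarith

/-- the intervals `I_i`, `i ∈ ℤ`, are pairwise disjoint and
their union is `(0, √2)`. -/
theorem Iint_pairwise_disjoint_and_union :
    (∀ i j : ℤ, i ≠ j → Disjoint (Iint i) (Iint j)) ∧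
    (⋃ i : ℤ, Iint i) = Set.Ioo (0 : ℝ) (Real.sqrt 2) := by
  have hβ0 := β_pos
  have hβ1 := β_lt_one
  have hs1 := one_lt_sqrt2
  have key : Real.sqrt 2 - β = 1 := by unfold β; ring
  constructor
  · intro i j hij
    wlog h : i < j generalizing i j
    · exact (this j i hij.symm (by omega)).symm
    rw [Set.disjoint_left]
    intro x hxi hxj
    rcases lt_trichotomy j 0 with hj | hj | hj
    · have hi : i < 0 := by omega
      rw [Iint_neg hi] at hxi
      rw [Iint_neg hj] at hxj
      have hn : j.natAbs + 1 ≤ i.natAbs := by omega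
      have hle : β ^ i.natAbs ≤ β ^ (j.natAbs + 1) :=
        pow_le_pow_of_le_one hβ0.le hβ1.le hn
      linarith [hxi.2, hxj.1]
    · subst hj
      rw [Iint_neg h] at hxi
      rw [Iint_zero] at hxj
      have hn : 1 ≤ i.natAbs := by omega
      have hle : β ^ i.natAbs ≤ β ^ 1 :=
        pow_le_pow_of_le_one hβ0.le hβ1.le hn
      rw [pow_one] at hle
      linarith [hxi.2, hxj.1]
    · rw [Iint_pos hj] at hxj
      rcases lt_trichotomy i 0 with hi | hi | hi
      · rw [Iint_neg hi] at hxi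
        have h1 : β ^ i.natAbs ≤ β ^ 1 :=
          pow_le_pow_of_le_one hβ0.le hβ1.le (by omega)
        have h2 : β ^ j.natAbs ≤ β ^ 1 :=
          pow_le_pow_of_le_one hβ0.le hβ1.le (by omega)
        rw [pow_one] at h1 h2
        linarith [hxi.2, hxj.1]
      · subst hi
        rw [Iint_zero] at hxi
        have h2 : β ^ j.natAbs ≤ β ^ 1 :=
          pow_le_pow_of_le_one hβ0.le hβ1.le (by omega)
        rw [pow_one] at h2
        linarith [hxi.2, hxj.1]
      · rw [Iint_pos hi] at hxi
        have hn : i.natAbs + 1 ≤ j.natAbs := by omega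
        have hle : β ^ j.natAbs ≤ β ^ (i.natAbs + 1) :=
          pow_le_pow_of_le_one hβ0.le hβ1.le hn
        linarith [hxi.2, hxj.1]
  · ext x
    simp only [Set.mem_iUnion, Set.mem_Ioo]
    constructor
    · rintro ⟨i, hx⟩
      rcases lt_trichotomy i 0 with hi | hi | hi
      · rw [Iint_neg hi] at hx
        have h1 : 0 < β ^ (i.natAbs + 1) := pow_pos hβ0 _
        have h2 : β ^ i.natAbs ≤ 1 := pow_le_one₀ hβ0.le hβ1.le
        exact ⟨by linarith [hx.1], by linarith [hx.2]⟩
      · subst hi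
        rw [Iint_zero] at hx
        exact ⟨by linarith [hx.1], by linarith [hx.2]⟩
      · rw [Iint_pos hi] at hx
        have h1 : β ^ i.natAbs ≤ β ^ 1 :=
          pow_le_pow_of_le_one hβ0.le hβ1.le (by omega)
        rw [pow_one] at h1
        have h2 : 0 < β ^ (i.natAbs + 1) := pow_pos hβ0 _
        exact ⟨by linarith [hx.1], by linarith [hx.2]⟩
    · rintro ⟨hx0, hx2⟩
      rcases le_or_gt x β with hxβ | hxβ
      · obtain ⟨n, hn1, hlt, hle⟩ := exists_pow_sand hx0 hxβ
        refine ⟨-(n : ℤ), ?_⟩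
        have hneg : -(n : ℤ) < 0 := by omega
        rw [Iint_neg hneg]
        have : (-(n : ℤ)).natAbs = n := by omega
        rw [this]
        exact ⟨hlt, hle⟩
      · rcases lt_or_ge x 1 with hx1 | hx1
        · exact ⟨0, by rw [Iint_zero]; exact ⟨hxβ, hx1⟩⟩
        · have hy0 : 0 < Real.sqrt 2 - x := by linarith
          have hyβ : Real.sqrt 2 - x ≤ β := by linarith
          obtain ⟨n, hn1, hlt, hle⟩ := exists_pow_sand hy0 hyβ
          refine ⟨(n : ℤ), ?_⟩
          have hpos : (0 : ℤ) < (n : ℤ) := by omega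
          rw [Iint_pos hpos]
          have : ((n : ℤ)).natAbs = n := by omega
          rw [this]
          exact ⟨by linarith, by linarith⟩
end
end

section
/- The point √2/2 satisfies f(√2/2) = √2/2, and it is the unique s ∈ [0, √2] such that f^(k)(s) ∈ I_0 = (β, 1) for every k ≥ 0. -/
noncomputable section

lemma sqrt2_sq : Real.sqrt 2 * Real.sqrt 2 = 2 := Real.mul_self_sqrt (by norm_num)

lemma fval_zero (s : ℝ) : fval 0 s = ω * (s - β) := by simp [fval]

lemma mem_I0 : Real.sqrt 2 / 2 ∈ Iint 0 := by
  rw [Iint_zero]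
  constructor
  · unfold β; nlinarith [sqrt2_lt_two, one_lt_sqrt2]
  · nlinarith [sqrt2_lt_two]

lemma fix_eq : ω * (Real.sqrt 2 / 2 - β) = Real.sqrt 2 / 2 := by
  unfold ω β
  linear_combination (-(1:ℝ)/2) * sqrt2_sq

/-- `√2/2` is a fixed point of `f`, and it is the unique point
of `[0,√2]` all of whose iterates lie in `I_0 = (β,1)`. -/
theorem luroth_fixed_point_sqrt2_div_two (f : ℝ → ℝ) (hf : IsLuroth f) :
    f (Real.sqrt 2 / 2) = Real.sqrt 2 / 2 ∧
    (∀ k : ℕ, f^[k] (Real.sqrt 2 / 2) ∈ Iint 0) ∧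
    (∀ s ∈ Set.Icc (0 : ℝ) (Real.sqrt 2),
      (∀ k : ℕ, f^[k] s ∈ Iint 0) → s = Real.sqrt 2 / 2) := by
  obtain ⟨-, -, hI⟩ := hf
  have hfix : f (Real.sqrt 2 / 2) = Real.sqrt 2 / 2 := by
    rw [hI 0 _ mem_I0, fval_zero, fix_eq]
  have hiter : ∀ k : ℕ, f^[k] (Real.sqrt 2 / 2) = Real.sqrt 2 / 2 := by
    intro k
    induction k with
    | zero => rfl
    | succ n ih => rw [Function.iterate_succ_apply', ih, hfix]
  refine ⟨hfix, fun k => by rw [hiter k]; exact mem_I0, ?_⟩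
  intro s _ hall
  by_contra hne
  -- key: f^[k] s - √2/2 = ω^k * (s - √2/2)
  have key : ∀ k : ℕ, f^[k] s - Real.sqrt 2 / 2 = ω ^ k * (s - Real.sqrt 2 / 2) := by
    intro k
    induction k with
    | zero => simp
    | succ n ih =>
      rw [Function.iterate_succ_apply', hI 0 _ (hall n), fval_zero, pow_succ]
      have : ω * (f^[n] s - Real.sqrt 2 / 2) = ω * (f^[n] s - β) - Real.sqrt 2 / 2 := by
        have := fix_eq; ring_nf; ring_nf at this ⊢; linarith [this]
      linarith [congrArg (fun x => ω * x) ih, this,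
        mul_comm ω (ω ^ n * (s - Real.sqrt 2 / 2))]
  have hω : (1:ℝ) < ω := by unfold ω; linarith [one_lt_sqrt2]
  have hd : 0 < |s - Real.sqrt 2 / 2| := abs_pos.mpr (sub_ne_zero.mpr hne)
  obtain ⟨k, hk⟩ := pow_unbounded_of_one_lt (1 / |s - Real.sqrt 2 / 2|) hω
  have hbig : 1 < ω ^ k * |s - Real.sqrt 2 / 2| := by
    rw [div_lt_iff₀ hd] at hk; linarith
  have hmem := hall k
  rw [Iint_zero] at hmem
  have habs : |f^[k] s - Real.sqrt 2 / 2| < 1 := by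
    rw [abs_lt]
    constructor
    · have : β > 0 := by unfold β; linarith [one_lt_sqrt2]
      nlinarith [hmem.1, sqrt2_lt_two, Real.sqrt_nonneg 2]
    · nlinarith [hmem.2, Real.sqrt_nonneg 2]
  rw [key, abs_mul, abs_pow, abs_of_pos (by linarith : (0:ℝ) < ω)] at habs
  linarith
end
end
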